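/- Suppose 0 < α ≤ 1, M = 0, and 0 < q < q₂ := (1 − (α+1)^(−1/2))·n. Then the constant function u*(x) = (0, √n, 0) is a global minimizer of ∫_Ω H_TF, and every global minimizer equals u* almost everywhere on Ω. -/

import Mathlib

open MeasureTheory

noncomputable section

abbrev E3 := EuclideanSpace ℝ (Fin 3)

/-- The sign `s`: `1` if `α ≥ 0`, `-1` otherwise. -/
def sgn' (α : ℝ) : ℝ := if 0 ≤ α then 1 else -1

/-- Thomas–Fermi energy density; coordinates: `v 0 = u₁`, `v 1 = u₀`, `v 2 = u₋₁`. -/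
def HTF (α q : ℝ) (v : Fin 3 → ℝ) : ℝ :=
  (1/2) * (v 0 ^ 2 + v 1 ^ 2 + v 2 ^ 2) ^ 2
    + (α/2) * (2 * v 1 ^ 2 * (v 0 - sgn' α * v 2) ^ 2 + (v 0 ^ 2 - v 2 ^ 2) ^ 2)
    + q * (v 0 ^ 2 + v 2 ^ 2)

/-- Admissibility: `u ∈ L⁴(Ω; ℝ³)`, nonnegative components a.e. on `Ω`,
with prescribed total mass `N` and total magnetization `M`. -/
structure Admissible (Ω : Set E3) (N M : ℝ) (u : E3 → Fin 3 → ℝ) : Prop where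
  memL4 : MemLp u 4 (volume.restrict Ω)
  nonneg : ∀ᵐ x ∂(volume.restrict Ω), ∀ i, 0 ≤ u x i
  mass : ∫ x in Ω, (u x 0 ^ 2 + u x 1 ^ 2 + u x 2 ^ 2) = N
  mag : ∫ x in Ω, (u x 0 ^ 2 - u x 2 ^ 2) = M

/-- `u` is a global minimizer of `∫_Ω H_TF` among admissible functions. -/
def IsMinimizer (Ω : Set E3) (α q N M : ℝ) (u : E3 → Fin 3 → ℝ) : Prop :=
  Admissible Ω N M u ∧
    ∀ v : E3 → Fin 3 → ℝ, Admissible Ω N M v →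
      ∫ x in Ω, HTF α q (u x) ≤ ∫ x in Ω, HTF α q (v x)


-- AUX (already checked)
lemma htf_cont (α q : ℝ) : Continuous (HTF α q) := by unfold HTF; fun_prop

lemma htf_key {α q : ℝ} (hα : 0 ≤ α) (hq : 0 ≤ q) (n : ℝ) (v : Fin 3 → ℝ) :
    n * (v 0 ^ 2 + v 1 ^ 2 + v 2 ^ 2) - n ^ 2 / 2 ≤ HTF α q v := by
  unfold HTF sgn'
  rw [if_pos hα]
  nlinarith [sq_nonneg (v 0 ^ 2 + v 1 ^ 2 + v 2 ^ 2 - n),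
    mul_nonneg hα (sq_nonneg (v 1 * (v 0 - v 2))),
    mul_nonneg hα (sq_nonneg (v 0 ^ 2 - v 2 ^ 2)),
    mul_nonneg hq (sq_nonneg (v 0)), mul_nonneg hq (sq_nonneg (v 2))]

lemma htf_eqcase {α q n : ℝ} (hα : 0 < α) (hq : 0 < q) (hn : 0 ≤ n) {v : Fin 3 → ℝ}
    (hv : ∀ i, 0 ≤ v i)
    (h : HTF α q v ≤ n * (v 0 ^ 2 + v 1 ^ 2 + v 2 ^ 2) - n ^ 2 / 2) :
    v = ![0, Real.sqrt n, 0] := by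
  unfold HTF sgn' at h
  rw [if_pos hα.le] at h
  have hs0 : (0:ℝ) ≤ v 0 ^ 2 + v 2 ^ 2 := by positivity
  have hqs : q * (v 0 ^ 2 + v 2 ^ 2) ≤ 0 := by
    nlinarith [sq_nonneg (v 0 ^ 2 + v 1 ^ 2 + v 2 ^ 2 - n),
      mul_nonneg hα.le (sq_nonneg (v 1 * (v 0 - v 2))),
      mul_nonneg hα.le (sq_nonneg (v 0 ^ 2 - v 2 ^ 2))]
  have hs : v 0 ^ 2 + v 2 ^ 2 = 0 := by
    rcases lt_or_eq_of_le hs0 with h' | h'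
    · exfalso; nlinarith [mul_pos hq h']
    · exact h'.symm
  have h0 : v 0 = 0 := by
    have : v 0 ^ 2 = 0 := by nlinarith [sq_nonneg (v 0), sq_nonneg (v 2)]
    exact pow_eq_zero_iff (two_ne_zero) |>.mp this
  have h2 : v 2 = 0 := by
    have : v 2 ^ 2 = 0 := by nlinarith [sq_nonneg (v 0), sq_nonneg (v 2)]
    exact pow_eq_zero_iff (two_ne_zero) |>.mp this
  rw [h0, h2] at h
  have hsq : (v 1 ^ 2 - n) ^ 2 = 0 := le_antisymm (by nlinarith) (sq_nonneg _)
  have h1 : v 1 ^ 2 = n := by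
    have := sq_eq_zero_iff.mp hsq
    linarith [sub_eq_zero.mp this]
  have hv1 : v 1 = Real.sqrt n := by rw [← h1, Real.sqrt_sq (hv 1)]
  funext i
  fin_cases i <;> simp [h0, h2, hv1]

lemma htf_nonneg {α q : ℝ} (hα : 0 ≤ α) (hq : 0 ≤ q) (v : Fin 3 → ℝ) : 0 ≤ HTF α q v := by
  unfold HTF sgn'
  rw [if_pos hα]
  nlinarith [mul_nonneg hα (sq_nonneg (v 1 * (v 0 - v 2))),
    mul_nonneg hα (sq_nonneg (v 0 ^ 2 - v 2 ^ 2)),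
    mul_nonneg hq (sq_nonneg (v 0)), mul_nonneg hq (sq_nonneg (v 2)),
    sq_nonneg (v 0 ^ 2 + v 1 ^ 2 + v 2 ^ 2)]

lemma sq_le_normsq (w : Fin 3 → ℝ) (i : Fin 3) : w i ^ 2 ≤ ‖w‖ ^ 2 := by
  have := norm_le_pi_norm w i
  rw [Real.norm_eq_abs] at this
  nlinarith [abs_nonneg (w i), sq_abs (w i)]

lemma htf_bound {α q : ℝ} (hα : 0 ≤ α) (hq : 0 ≤ q) (w : Fin 3 → ℝ) :
    HTF α q w ≤ (9/2 + 6*α + 2*q) * ‖w‖ ^ 4 + (9/2 + 6*α + 2*q) := by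
  have ha : (0:ℝ) ≤ ‖w‖ := norm_nonneg w
  have s0 : w 0 ^ 2 ≤ ‖w‖ ^ 2 := sq_le_normsq w 0
  have s1 : w 1 ^ 2 ≤ ‖w‖ ^ 2 := sq_le_normsq w 1
  have s2 : w 2 ^ 2 ≤ ‖w‖ ^ 2 := sq_le_normsq w 2
  have hρ3 : w 0 ^ 2 + w 1 ^ 2 + w 2 ^ 2 ≤ 3 * ‖w‖ ^ 2 := by linarith
  have hρ0 : (0:ℝ) ≤ w 0 ^ 2 + w 1 ^ 2 + w 2 ^ 2 := by positivity
  have hA : (w 0 ^ 2 + w 1 ^ 2 + w 2 ^ 2) ^ 2 ≤ 9 * ‖w‖ ^ 4 := by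
    nlinarith [mul_le_mul hρ3 hρ3 hρ0 (by positivity : (0:ℝ) ≤ 3 * ‖w‖ ^ 2)]
  have hd : (w 0 - w 2) ^ 2 ≤ 4 * ‖w‖ ^ 2 := by nlinarith [sq_nonneg (w 0 + w 2)]
  have hB : w 1 ^ 2 * (w 0 - w 2) ^ 2 ≤ 4 * ‖w‖ ^ 4 := by
    nlinarith [mul_le_mul s1 hd (sq_nonneg (w 0 - w 2)) (by positivity : (0:ℝ) ≤ ‖w‖ ^ 2)]
  have hC : (w 0 ^ 2 - w 2 ^ 2) ^ 2 ≤ ‖w‖ ^ 4 := by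
    nlinarith [mul_nonneg (by nlinarith [sq_nonneg (w 2)] : (0:ℝ) ≤ ‖w‖ ^ 2 - w 0 ^ 2 + w 2 ^ 2)
      (by nlinarith [sq_nonneg (w 0)] : (0:ℝ) ≤ ‖w‖ ^ 2 + w 0 ^ 2 - w 2 ^ 2)]
  have hD : w 0 ^ 2 + w 2 ^ 2 ≤ 2 * (‖w‖ ^ 4 + 1) := by
    nlinarith [sq_nonneg (‖w‖ ^ 2 - 1), sq_nonneg (w 0), sq_nonneg (w 2)]
  unfold HTF sgn'
  rw [if_pos hα]
  nlinarith [mul_le_mul_of_nonneg_left hB hα, mul_le_mul_of_nonneg_left hC hα,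
    mul_le_mul_of_nonneg_left hD hq, hA,
    mul_nonneg hα (by positivity : (0:ℝ) ≤ ‖w‖ ^ 4),
    mul_nonneg hq (by positivity : (0:ℝ) ≤ ‖w‖ ^ 4)]

lemma rho_bound (w : Fin 3 → ℝ) : w 0 ^ 2 + w 1 ^ 2 + w 2 ^ 2 ≤ 3 * ‖w‖ ^ 4 + 3 := by
  have s0 := sq_le_normsq w 0
  have s1 := sq_le_normsq w 1
  have s2 := sq_le_normsq w 2
  nlinarith [sq_nonneg (‖w‖ ^ 2 - 1)]

/-- Antiferromagnetic case `m = 0`, `0 < q < q₂`: the unique minimizer is the nematic state. -/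
theorem antiferro_NS_m0
    (Ω : Set E3) (hΩm : MeasurableSet Ω) (hΩb : Bornology.IsBounded Ω)
    (hΩpos : 0 < volume Ω)
    (α q N n : ℝ)
    (hα0 : 0 < α) (hα1 : α ≤ 1) (hN : 0 < N)
    (hn : n = N / (volume Ω).toReal)
    (hq0 : 0 < q) (hq2 : q < (1 - 1 / Real.sqrt (α + 1)) * n)
    (ustar : Fin 3 → ℝ) (hustar : ustar = ![0, Real.sqrt n, 0]) :
    IsMinimizer Ω α q N 0 (fun _ => ustar) ∧
      ∀ u : E3 → Fin 3 → ℝ, IsMinimizer Ω α q N 0 u →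
        ∀ᵐ x ∂(volume.restrict Ω), u x = ustar := by
  subst hustar
  have hΩfin : volume Ω < ⊤ := hΩb.measure_lt_top
  have hFin : IsFiniteMeasure (volume.restrict Ω) :=
    ⟨by rw [Measure.restrict_apply_univ]; exact hΩfin⟩
  set c := (volume Ω).toReal with hc
  have hμuniv : (volume.restrict Ω).real Set.univ = c := by
    rw [measureReal_def, Measure.restrict_apply_univ]
  have hcpos : 0 < c := ENNReal.toReal_pos hΩpos.ne' hΩfin.ne
  have hnpos : 0 < n := by rw [hn]; positivity
  have hNc : N = n * c := by rw [hn, div_mul_cancel₀ N hcpos.ne']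
  -- value of HTF at ustar
  have hust : HTF α q (![0, Real.sqrt n, 0]) = n ^ 2 / 2 := by
    unfold HTF sgn'
    rw [if_pos hα0.le]
    norm_num [Real.sq_sqrt hnpos.le, Matrix.cons_val_two]
    ring
  -- integrability
  have key_int : ∀ u : E3 → Fin 3 → ℝ, MemLp u 4 (volume.restrict Ω) →
      Integrable (fun x => HTF α q (u x)) (volume.restrict Ω) ∧
      Integrable (fun x => u x 0 ^ 2 + u x 1 ^ 2 + u x 2 ^ 2) (volume.restrict Ω) := by
    intro u hu
    have hnm : Integrable (fun x => ‖u x‖ ^ (4:ℕ)) (volume.restrict Ω) := by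
      have h := hu.integrable_norm_rpow (by norm_num) (by norm_num)
      refine h.congr (Filter.Eventually.of_forall fun x => ?_)
      show ‖u x‖ ^ ((4:ENNReal).toReal) = ‖u x‖ ^ (4:ℕ)
      rw [show ((4:ENNReal).toReal) = ((4:ℕ):ℝ) by norm_num, Real.rpow_natCast]
    constructor
    · refine ((hnm.const_mul (9/2+6*α+2*q)).add (integrable_const (9/2+6*α+2*q))).mono'
        ((htf_cont α q).comp_aestronglyMeasurable hu.1) ?_
      refine Filter.Eventually.of_forall fun x => ?_
      rw [Real.norm_eq_abs, abs_of_nonneg (htf_nonneg hα0.le hq0.le _)]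
      exact htf_bound hα0.le hq0.le (u x)
    · have hcontρ : Continuous (fun w : Fin 3 → ℝ => w 0 ^ 2 + w 1 ^ 2 + w 2 ^ 2) := by fun_prop
      refine ((hnm.const_mul 3).add (integrable_const 3)).mono'
        (hcontρ.comp_aestronglyMeasurable hu.1) ?_
      refine Filter.Eventually.of_forall fun x => ?_
      rw [Real.norm_eq_abs, abs_of_nonneg (by positivity)]
      exact rho_bound (u x)
  -- lower bound for energy of any admissible v
  have lower : ∀ v : E3 → Fin 3 → ℝ, Admissible Ω N 0 v →
      n ^ 2 / 2 * c ≤ ∫ x in Ω, HTF α q (v x) := by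
    intro v hv
    obtain ⟨hI, hρ⟩ := key_int v hv.memL4
    have h1 : ∫ x in Ω, (n * (v x 0 ^ 2 + v x 1 ^ 2 + v x 2 ^ 2) - n ^ 2 / 2)
        ≤ ∫ x in Ω, HTF α q (v x) :=
      integral_mono_ae ((hρ.const_mul n).sub (integrable_const _)) hI
        (Filter.Eventually.of_forall fun x => htf_key hα0.le hq0.le n (v x))
    have h2 : ∫ x in Ω, (n * (v x 0 ^ 2 + v x 1 ^ 2 + v x 2 ^ 2) - n ^ 2 / 2)
        = n * N - n ^ 2 / 2 * c := by
      rw [integral_sub (hρ.const_mul n) (integrable_const _), integral_const_mul,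
        hv.mass, integral_const, hμuniv, smul_eq_mul]
      ring
    rw [h2] at h1
    have : n * N - n ^ 2 / 2 * c = n ^ 2 / 2 * c := by rw [hNc]; ring
    linarith
  -- energy of ustar
  have hconstint : ∫ x in Ω, HTF α q (![0, Real.sqrt n, 0]) = n ^ 2 / 2 * c := by
    rw [integral_const, hμuniv, smul_eq_mul, hust, mul_comm]
  -- admissibility of ustar
  have hadm : Admissible Ω N 0 (fun _ => ![0, Real.sqrt n, 0]) := by
    refine ⟨memLp_const _, Filter.Eventually.of_forall fun x i => ?_, ?_, ?_⟩
    · fin_cases i <;> simp [Real.sqrt_nonneg]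
    · have hval : (![0, Real.sqrt n, 0] : Fin 3 → ℝ) 0 ^ 2
          + (![0, Real.sqrt n, 0] : Fin 3 → ℝ) 1 ^ 2
          + (![0, Real.sqrt n, 0] : Fin 3 → ℝ) 2 ^ 2 = n := by
        norm_num [Real.sq_sqrt hnpos.le, Matrix.cons_val_two]
      simp only [hval]
      rw [integral_const, hμuniv, smul_eq_mul, hNc, mul_comm]
    · norm_num [Matrix.cons_val_two]
  constructor
  · exact ⟨hadm, fun v hv => by rw [hconstint]; exact lower v hv⟩
  · intro u hu
    have huadm := hu.1
    have hle : ∫ x in Ω, HTF α q (u x) ≤ n ^ 2 / 2 * c := by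
      have := hu.2 _ hadm
      rwa [hconstint] at this
    obtain ⟨hI, hρ⟩ := key_int u huadm.memL4
    set g : E3 → ℝ := fun x =>
      HTF α q (u x) - (n * (u x 0 ^ 2 + u x 1 ^ 2 + u x 2 ^ 2) - n ^ 2 / 2) with hg
    have hgint : Integrable g (volume.restrict Ω) :=
      hI.sub ((hρ.const_mul n).sub (integrable_const _))
    have hgnn : 0 ≤ᵐ[volume.restrict Ω] g :=
      Filter.Eventually.of_forall fun x => sub_nonneg.mpr (htf_key hα0.le hq0.le n (u x))
    have hgzero : ∫ x in Ω, g x = 0 := by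
      have hsplit : ∫ x in Ω, g x
          = (∫ x in Ω, HTF α q (u x))
            - ∫ x in Ω, (n * (u x 0 ^ 2 + u x 1 ^ 2 + u x 2 ^ 2) - n ^ 2 / 2) := by
        rw [hg]
        exact integral_sub hI ((hρ.const_mul n).sub (integrable_const _))
      have h2 : ∫ x in Ω, (n * (u x 0 ^ 2 + u x 1 ^ 2 + u x 2 ^ 2) - n ^ 2 / 2)
          = n * N - n ^ 2 / 2 * c := by
        rw [integral_sub (hρ.const_mul n) (integrable_const _), integral_const_mul,
          huadm.mass, integral_const, hμuniv, smul_eq_mul]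
        ring
      have h3 : n * N - n ^ 2 / 2 * c = n ^ 2 / 2 * c := by rw [hNc]; ring
      have hnonneg : 0 ≤ ∫ x in Ω, g x := integral_nonneg_of_ae hgnn
      have : ∫ x in Ω, g x ≤ 0 := by rw [hsplit, h2, h3]; linarith
      linarith
    have hgae : g =ᵐ[volume.restrict Ω] 0 :=
      (integral_eq_zero_iff_of_nonneg_ae hgnn hgint).mp hgzero
    filter_upwards [hgae, huadm.nonneg] with x hgx hx
    refine htf_eqcase hα0 hq0 hnpos.le hx ?_
    have : g x = 0 := hgx
    rw [hg] at this
    simp only at this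
    linarith
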